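/- With C = Diag(cos(kπ/n), k = 0,…,n−1) and S = Diag(sin(kπ/n), k = 0,…,n−1), the identity C·F̌²·S + S·F̌²·C = 0 holds. -/

import Mathlib

open Matrix Real

/-- The node-centered cosine matrix `(Ȟ_c)_{j,k} = n^{−1/2}·cos(2jkπ/n)`. -/
noncomputable def Hc (n : ℕ) : Matrix (Fin n) (Fin n) ℝ :=
  fun j k => Real.cos (2 * (j.val : ℝ) * (k.val : ℝ) * Real.pi / n) / Real.sqrt n

/-- The node-centered sine matrix `(Ȟ_s)_{j,k} = n^{−1/2}·sin(2jkπ/n)`. -/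
noncomputable def Hs (n : ℕ) : Matrix (Fin n) (Fin n) ℝ :=
  fun j k => Real.sin (2 * (j.val : ℝ) * (k.val : ℝ) * Real.pi / n) / Real.sqrt n

/-- The node-centered Fourier matrix `F̌ = Ȟ_c + i·Ȟ_s ∈ ℂ^{n×n}`. -/
noncomputable def fourierM (n : ℕ) : Matrix (Fin n) (Fin n) ℂ :=
  (Hc n).map Complex.ofReal + Complex.I • (Hs n).map Complex.ofReal

lemma fourierM_apply (n : ℕ) (j k : Fin n) :
    fourierM n j k = Complex.exp (2 * Real.pi * Complex.I * j * k / n) / Real.sqrt n := by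
  simp only [fourierM, Matrix.add_apply, Matrix.map_apply, Matrix.smul_apply, Hc, Hs,
    smul_eq_mul]
  rw [show ((2:ℂ) * Real.pi * Complex.I * j * k / n)
      = ((2 * (j.val:ℝ) * (k.val:ℝ) * Real.pi / n : ℝ) : ℂ) * Complex.I by push_cast; ring]
  rw [Complex.exp_mul_I]
  push_cast
  ring

lemma fourierM_sq_apply (n : ℕ) (hn : 1 ≤ n) (j k : Fin n) :
    (fourierM n ^ 2) j k =
      (∑ m : Fin n, Complex.exp (2 * Real.pi * Complex.I * (j.val + k.val) / n) ^ (m : ℕ)) / n := by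
  have hn0 : (n : ℝ) ≠ 0 := by positivity
  rw [sq, Matrix.mul_apply, Finset.sum_div]
  refine Finset.sum_congr rfl fun m _ => ?_
  rw [fourierM_apply, fourierM_apply, ← Complex.exp_nat_mul, div_mul_div_comm,
    ← Complex.exp_add]
  congr 1
  · congr 1
    field_simp
  · rw [← Complex.ofReal_mul, Real.mul_self_sqrt (by positivity)]
    norm_cast

/-- With `C = Diag(cos(kπ/n))` and `S = Diag(sin(kπ/n))`, we have
`C·F̌²·S + S·F̌²·C = 0`. -/
theorem C_F2_S_plus_S_F2_C (n : ℕ) (hn : 1 ≤ n) :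
    Matrix.diagonal (fun k : Fin n => (Real.cos ((k.val : ℝ) * Real.pi / n) : ℂ)) *
        fourierM n ^ 2 *
        Matrix.diagonal (fun k : Fin n => (Real.sin ((k.val : ℝ) * Real.pi / n) : ℂ)) +
      Matrix.diagonal (fun k : Fin n => (Real.sin ((k.val : ℝ) * Real.pi / n) : ℂ)) *
        fourierM n ^ 2 *
        Matrix.diagonal (fun k : Fin n => (Real.cos ((k.val : ℝ) * Real.pi / n) : ℂ)) =
      0 := by
  have hn0 : (n : ℝ) ≠ 0 := by positivity
  ext j k
  simp only [Matrix.add_apply, Matrix.diagonal_mul, Matrix.mul_diagonal, Matrix.zero_apply]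
  rw [show ∀ A : ℂ, (Real.cos ((j.val:ℝ) * Real.pi / n) : ℂ) * A *
        (Real.sin ((k.val:ℝ) * Real.pi / n) : ℂ) +
      (Real.sin ((j.val:ℝ) * Real.pi / n) : ℂ) * A *
        (Real.cos ((k.val:ℝ) * Real.pi / n) : ℂ) =
      A * (Real.sin ((j.val:ℝ) * Real.pi / n + (k.val:ℝ) * Real.pi / n) : ℂ) from
    fun A => by rw [Real.sin_add]; push_cast; ring]
  rw [fourierM_sq_apply n hn j k]
  rcases eq_or_ne (Complex.exp (2 * Real.pi * Complex.I * ((j.val:ℕ) + (k.val:ℕ)) / n)) 1 with h1 | h1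
  · -- exponential is 1: then n ∣ j+k, so sin factor vanishes
    rw [Complex.exp_eq_one_iff] at h1
    obtain ⟨m, hm⟩ := h1
    have h2pi : (2 * Real.pi * Complex.I : ℂ) ≠ 0 := by
      exact mul_ne_zero (mul_ne_zero two_ne_zero
        (by exact_mod_cast Complex.ofReal_ne_zero.mpr Real.pi_ne_zero)) Complex.I_ne_zero
    have hnC : (n:ℂ) ≠ 0 := by exact_mod_cast hn0
    have hjk : ((j.val : ℂ) + (k.val : ℂ)) = m * n := by
      have h' : (2 * (Real.pi:ℂ) * Complex.I) * ((j.val:ℂ) + k.val) =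
          (2 * (Real.pi:ℂ) * Complex.I) * (m * n) := by
        have hm' := hm
        field_simp at hm'
        linear_combination (2 * (Real.pi:ℂ) * Complex.I) * hm'
      exact mul_left_cancel₀ h2pi h'
    have hjkN : (j.val : ℤ) + k.val = m * n := by exact_mod_cast hjk
    have hmnn : m = 0 ∨ m = 1 := by
      have hj : (j.val : ℤ) < n := by exact_mod_cast j.isLt
      have hk : (k.val : ℤ) < n := by exact_mod_cast k.isLt
      have h0 : (0:ℤ) ≤ m * n := by rw [← hjkN]; positivity
      have h2 : m * n < 2 * n := by rw [← hjkN]; omega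
      have hnpos : (0:ℤ) < n := by exact_mod_cast hn
      have hm0 : 0 ≤ m := by nlinarith
      have hm1 : m ≤ 1 := by nlinarith
      omega
    have hsin : Real.sin ((j.val:ℝ) * Real.pi / n + (k.val:ℝ) * Real.pi / n) = 0 := by
      have : (j.val:ℝ) * Real.pi / n + (k.val:ℝ) * Real.pi / n = m * Real.pi := by
        have : ((j.val:ℝ) + k.val) = m * n := by exact_mod_cast hjkN
        field_simp
        linear_combination this
      rw [this]
      rcases hmnn with h | h <;> simp [h]
    rw [hsin]
    simp
  · -- exponential ≠ 1: geometric sum vanishes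
    rw [Fin.sum_univ_eq_sum_range (fun i => _ ^ i), geom_sum_eq h1, ← Complex.exp_nat_mul]
    have : (n:ℂ) * (2 * Real.pi * Complex.I * ((j.val:ℕ) + (k.val:ℕ)) / n) =
        ((j.val + k.val : ℕ) : ℂ) * (2 * Real.pi * Complex.I) := by
      have : (n:ℂ) ≠ 0 := by exact_mod_cast hn0
      simp only [Nat.cast_add]
      field_simp
    rw [this, Complex.exp_nat_mul_two_pi_mul_I]
    simp
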